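/- arXiv:1311.3522 — 2 statements merged into one kernel-verified Lean document; each statement's English description precedes it below -/
import Mathlib

section
/- Let n be a composite integer and suppose ∑_{j=1}^{n-1} j^{e} ≡ -1 (mod n) for some positive integer e. Then n is square-free. -/
open Finset

/-- The Carmichael function: exponent of the unit group of `ZMod n`. -/
noncomputable def carmichael (n : ℕ) : ℕ := Monoid.exponent (ZMod n)ˣ

/-- `n` is composite. -/
def Composite (n : ℕ) : Prop := 2 ≤ n ∧ ¬ n.Prime

/-- `n` is a Giuga number. -/
def IsGiuga (n : ℕ) : Prop :=
  Composite n ∧ ∀ p : ℕ, p.Prime → p ∣ n → p ∣ (n / p - 1)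

lemma aux_sum_mul (p e m : ℕ) :
    ∑ j ∈ Finset.range (p * m), ((j : ZMod p)) ^ e
      = (m : ZMod p) * ∑ j ∈ Finset.range p, ((j : ZMod p)) ^ e := by
  induction m with
  | zero => simp
  | succ m ih =>
    rw [Nat.mul_succ, Finset.sum_range_add, ih]
    have : ∀ x ∈ Finset.range p, ((p * m + x : ℕ) : ZMod p) ^ e = ((x : ℕ) : ZMod p) ^ e := by
      intro x _
      push_cast
      rw [ZMod.natCast_self]
      ring_nf
    rw [Finset.sum_congr rfl this]
    push_cast
    ring

theorem squarefree_of_powerSum (n e : ℕ) (hn : Composite n) (he : 0 < e)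
    (h : ∑ j ∈ Finset.Ico 1 n, (j : ZMod n) ^ e = -1) : Squarefree n := by
  by_contra hsf
  rw [Nat.squarefree_iff_prime_squarefree] at hsf
  push_neg at hsf
  obtain ⟨p, hp, hpp⟩ := hsf
  haveI : Fact p.Prime := ⟨hp⟩
  have hpn : p ∣ n := (dvd_mul_right p p).trans hpp
  have hmid : p ∣ n / p := Nat.dvd_div_of_mul_dvd hpp
  -- map `h` to `ZMod p`
  have h' : ∑ j ∈ Finset.Ico 1 n, ((j : ZMod p)) ^ e = -1 := by
    have := congrArg (ZMod.castHom hpn (ZMod p)) h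
    rw [map_sum, map_neg, map_one] at this
    simpa [map_pow, map_natCast] using this
  have hn0 : 0 < n := lt_of_lt_of_le (by norm_num) hn.1
  -- the sum over Ico 1 n equals the sum over range n (the 0 term vanishes)
  have hrange : ∑ j ∈ Finset.range n, ((j : ZMod p)) ^ e
      = ∑ j ∈ Finset.Ico 1 n, ((j : ZMod p)) ^ e := by
    rw [Finset.range_eq_Ico, Finset.sum_eq_sum_Ico_succ_bot hn0]
    simp [zero_pow he.ne']
  have hnp : n = p * (n / p) := (Nat.mul_div_cancel' hpn).symm
  have hzero : ∑ j ∈ Finset.range n, ((j : ZMod p)) ^ e = 0 := by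
    rw [hnp, aux_sum_mul]
    have : ((n / p : ℕ) : ZMod p) = 0 := (ZMod.natCast_eq_zero_iff _ _).mpr hmid
    rw [this, zero_mul]
  rw [hrange, h'] at hzero
  exact (neg_ne_zero.mpr (one_ne_zero : (1 : ZMod p) ≠ 0)) hzero
end

section
/- If n is a Giuga number and a Carmichael number (a strong Giuga number), then for every positive integer k, n is a k-strong Giuga number; consequently, if there exists a positive integer k for which no k-strong Giuga number exists, then Giuga's conjecture holds (no composite n satisfies ∑_{j=1}^{n-1} j^{n-1} ≡ -1 (mod n)). -/
open Finset

/-- `n` is a `k`-strong Giuga number. -/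
def IsKStrongGiuga (n k : ℕ) : Prop :=
  Composite n ∧ ∑ j ∈ Finset.Ico 1 n, (j : ZMod n) ^ (k * (n - 1)) = -1

/-- Sum of `x^e` over a finite prime field. -/
lemma aux_sum_univ_pow (p : ℕ) [hp : Fact p.Prime] {e : ℕ} (he : e ≠ 0) :
    ∑ x : ZMod p, x ^ e = if (p - 1) ∣ e then (-1 : ZMod p) else 0 := by
  classical
  have hu : ∑ x : (ZMod p)ˣ, ((x : ZMod p)) ^ e = ∑ x : ZMod p, x ^ e := by
    rw [← Finset.add_sum_erase _ (fun x : ZMod p => x ^ e) (Finset.mem_univ (0 : ZMod p)),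
      zero_pow he, zero_add]
    refine Finset.sum_nbij' (fun u => (u : ZMod p))
      (fun x => if h : x = 0 then 1 else Units.mk0 x h) ?_ ?_ ?_ ?_ ?_
    · intro u _
      exact Finset.mem_erase.mpr ⟨u.ne_zero, Finset.mem_univ _⟩
    · intro x _; exact Finset.mem_univ _
    · intro u _
      simp [u.ne_zero]
    · intro x hx
      simp [(Finset.mem_erase.mp hx).1]
    · intro u _; rfl
  rw [← hu]
  have h := FiniteField.sum_pow_units (ZMod p) e
  rw [ZMod.card] at h
  rw [← h]

lemma aux_sum_range_eq_univ (p : ℕ) [NeZero p] (e : ℕ) :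
    ∑ j ∈ Finset.range p, (j : ZMod p) ^ e = ∑ x : ZMod p, x ^ e := by
  refine Finset.sum_nbij' (fun j => ((j : ZMod p))) (fun x => x.val) ?_ ?_ ?_ ?_ ?_
  · intro j _; exact Finset.mem_univ _
  · intro x _; exact Finset.mem_range.mpr (ZMod.val_lt x)
  · intro j hj; exact ZMod.val_natCast_of_lt (Finset.mem_range.mp hj)
  · intro x _; exact ZMod.natCast_zmod_val x
  · intro j _; rfl

lemma aux_sum_range_mul (p m e : ℕ) :
    ∑ j ∈ Finset.range (m * p), (j : ZMod p) ^ e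
      = (m : ZMod p) * ∑ r ∈ Finset.range p, (r : ZMod p) ^ e := by
  induction m with
  | zero => simp
  | succ m ih =>
    have : (m + 1) * p = m * p + p := by ring
    rw [this, Finset.sum_range_add, ih]
    have : ∀ r : ℕ, ((m * p + r : ℕ) : ZMod p) ^ e = ((r : ℕ) : ZMod p) ^ e := by
      intro r
      push_cast
      rw [ZMod.natCast_self]
      ring_nf
    simp only [this]
    push_cast
    ring

lemma aux_sum_Ico_mod_p (n p e : ℕ) (hp : p.Prime) (hpn : p ∣ n) (he : e ≠ 0) :
    ∑ j ∈ Finset.Ico 1 n, (j : ZMod p) ^ e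
      = (n / p : ℕ) * (if (p - 1) ∣ e then (-1 : ZMod p) else 0) := by
  haveI : Fact p.Prime := ⟨hp⟩
  have h1 : ∑ j ∈ Finset.Ico 1 n, (j : ZMod p) ^ e
      = ∑ j ∈ Finset.range n, (j : ZMod p) ^ e := by
    refine Finset.sum_subset ?_ ?_
    · intro j hj
      rw [Finset.mem_Ico] at hj
      exact Finset.mem_range.mpr hj.2
    · intro j hj hj'
      have : j = 0 := by
        rw [Finset.mem_range] at hj
        rw [Finset.mem_Ico] at hj'
        omega
      simp [this, zero_pow he]
  rw [h1]
  conv_lhs => rw [← Nat.div_mul_cancel hpn]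
  rw [aux_sum_range_mul, aux_sum_range_eq_univ, aux_sum_univ_pow p he]

/-- Key characterization: for composite `n` and `e ≠ 0`, the power-sum condition holds
iff each prime `p ∣ n` satisfies `(p-1) ∣ e` and `p ∣ n/p - 1`. -/
lemma aux_char (n e : ℕ) (hn : 2 ≤ n) (he : e ≠ 0) :
    (∑ j ∈ Finset.Ico 1 n, (j : ZMod n) ^ e = -1) ↔
      ∀ p : ℕ, p.Prime → p ∣ n → (p - 1) ∣ e ∧ p ∣ (n / p - 1) := by
  have hn0 : 0 < n := by omega
  constructor
  · intro h p pp hpn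
    haveI : Fact p.Prime := ⟨pp⟩
    have h2 : ∑ j ∈ Finset.Ico 1 n, (j : ZMod p) ^ e = -1 := by
      have := congrArg (ZMod.castHom hpn (ZMod p)) h
      simpa [map_sum, map_pow, map_natCast, map_neg, map_one] using this
    rw [aux_sum_Ico_mod_p n p e pp hpn he] at h2
    have hdl : (p - 1) ∣ e := by
      by_contra hne
      rw [if_neg hne, mul_zero] at h2
      exact one_ne_zero (neg_eq_zero.mp h2.symm)
    refine ⟨hdl, ?_⟩
    rw [if_pos hdl, mul_neg_one] at h2
    have hq : ((n / p : ℕ) : ZMod p) = ((1 : ℕ) : ZMod p) := by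
      have : ((n / p : ℕ) : ZMod p) = 1 := by
        have h3 : -((n / p : ℕ) : ZMod p) = -1 := by linear_combination h2
        exact neg_injective h3
      simpa using this
    have h1le : 1 ≤ n / p := Nat.one_le_div_iff pp.pos |>.mpr (Nat.le_of_dvd hn0 hpn)
    have := (ZMod.natCast_eq_natCast_iff _ _ _).mp hq
    exact (Nat.modEq_iff_dvd' h1le).mp this.symm
  · intro H
    have hsf : Squarefree n := by
      rw [Nat.squarefree_iff_prime_squarefree]
      intro p pp hsq
      have hpn : p ∣ n := (dvd_mul_right p p).trans hsq
      obtain ⟨_, c2⟩ := H p pp hpn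
      have hdiv : p ∣ n / p := (Nat.dvd_div_iff_mul_dvd hpn).mpr hsq
      have h1le : 1 ≤ n / p := Nat.one_le_div_iff pp.pos |>.mpr (Nat.le_of_dvd hn0 hpn)
      have : p ∣ 1 := by
        have := Nat.dvd_sub hdiv c2
        rwa [Nat.sub_sub_self h1le] at this
      exact pp.one_lt.ne' (Nat.dvd_one.mp this)
    set N : ℕ := ∑ j ∈ Finset.Ico 1 n, j ^ e with hN
    have hcast : ∀ m : ℕ, ((N : ℕ) : ZMod m) = ∑ j ∈ Finset.Ico 1 n, (j : ZMod m) ^ e := by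
      intro m; rw [hN]; push_cast; rfl
    have hdvd : n ∣ N + 1 := by
      conv_lhs => rw [← Nat.prod_primeFactors_of_squarefree hsf]
      refine Finset.prod_primes_dvd _ ?_ ?_
      · intro p hp; exact (Nat.prime_of_mem_primeFactors hp).prime
      · intro p hp
        have pp := Nat.prime_of_mem_primeFactors hp
        have hpn : p ∣ n := Nat.dvd_of_mem_primeFactors hp
        haveI : Fact p.Prime := ⟨pp⟩
        obtain ⟨c1, c2⟩ := H p pp hpn
        rw [← ZMod.natCast_eq_zero_iff]
        push_cast
        have h1le : 1 ≤ n / p := Nat.one_le_div_iff pp.pos |>.mpr (Nat.le_of_dvd hn0 hpn)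
        have hq : ((n / p : ℕ) : ZMod p) = 1 := by
          have : (1 : ℕ) ≡ n / p [MOD p] := (Nat.modEq_iff_dvd' h1le).mpr c2
          have := (ZMod.natCast_eq_natCast_iff _ _ _).mpr this
          simpa using this.symm
        have : (N : ZMod p) = -1 := by
          rw [hcast p, aux_sum_Ico_mod_p n p e pp hpn he, if_pos c1, hq]
          ring
        rw [this]; ring
    have : ((N + 1 : ℕ) : ZMod n) = 0 := (ZMod.natCast_eq_zero_iff _ _).mpr hdvd
    push_cast at this
    rw [← hcast n]
    linear_combination this

lemma aux_carmichael_dvd (n : ℕ) (hn : 2 ≤ n) (hsf : Squarefree n)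
    (H : ∀ p : ℕ, p.Prime → p ∣ n → (p - 1) ∣ (n - 1)) : carmichael n ∣ n - 1 := by
  haveI : NeZero n := ⟨by omega⟩
  apply Monoid.exponent_dvd_of_forall_pow_eq_one
  intro u
  set v : ℕ := (u : ZMod n).val with hv
  have hcop : v.Coprime n := ZMod.val_coe_unit_coprime u
  have hv1 : 1 ≤ v := by
    rcases Nat.eq_zero_or_pos v with h0 | h; swap; exact h
    exfalso
    rw [h0] at hcop
    simp [Nat.Coprime] at hcop
    omega
  have hple : 1 ≤ v ^ (n - 1) := Nat.one_le_pow _ _ hv1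
  have hdvd : n ∣ v ^ (n - 1) - 1 := by
    conv_lhs => rw [← Nat.prod_primeFactors_of_squarefree hsf]
    refine Finset.prod_primes_dvd _ ?_ ?_
    · intro p hp; exact (Nat.prime_of_mem_primeFactors hp).prime
    · intro p hp
      have pp := Nat.prime_of_mem_primeFactors hp
      have hpn : p ∣ n := Nat.dvd_of_mem_primeFactors hp
      have hcp : v.Coprime p := Nat.Coprime.coprime_dvd_right hpn hcop
      have hferm : v ^ (p - 1) ≡ 1 [MOD p] := by
        have := Nat.ModEq.pow_totient hcp
        rwa [Nat.totient_prime pp] at this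
      obtain ⟨c, hc⟩ := H p pp hpn
      have : v ^ (n - 1) ≡ 1 [MOD p] := by
        rw [hc, pow_mul]
        calc (v ^ (p - 1)) ^ c ≡ 1 ^ c [MOD p] := hferm.pow c
          _ = 1 := one_pow c
      exact (Nat.modEq_iff_dvd' hple).mp this.symm
  have h1 : ((v ^ (n - 1) : ℕ) : ZMod n) = ((1 : ℕ) : ZMod n) := by
    rw [ZMod.natCast_eq_natCast_iff]
    exact ((Nat.modEq_iff_dvd' hple).mpr hdvd).symm
  push_cast at h1
  rw [hv, ZMod.natCast_zmod_val] at h1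
  ext
  push_cast
  exact h1

lemma aux_sub_one_dvd_carmichael (n p : ℕ) (hn : 2 ≤ n) (pp : p.Prime) (hpn : p ∣ n) :
    (p - 1) ∣ carmichael n := by
  haveI : NeZero n := ⟨by omega⟩
  haveI : Fact p.Prime := ⟨pp⟩
  have hsurj := ZMod.unitsMap_surjective hpn
  have h := MonoidHom.exponent_dvd hsurj
  have hcard : Monoid.exponent (ZMod p)ˣ = p - 1 := by
    rw [IsCyclic.exponent_eq_card, Nat.card_eq_fintype_card, ZMod.card_units]
  rw [carmichael, ← hcard]
  exact h

theorem strongGiuga_all_k_and_conjecture :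
    (∀ n : ℕ, IsGiuga n → carmichael n ∣ n - 1 →
      ∀ k : ℕ, 0 < k → IsKStrongGiuga n k) ∧
    ((∃ k : ℕ, 0 < k ∧ ∀ n : ℕ, ¬ IsKStrongGiuga n k) →
      ∀ n : ℕ, Composite n →
        ¬ ∑ j ∈ Finset.Ico 1 n, (j : ZMod n) ^ (n - 1) = -1) := by
  have part1 : ∀ n : ℕ, IsGiuga n → carmichael n ∣ n - 1 →
      ∀ k : ℕ, 0 < k → IsKStrongGiuga n k := by
    rintro n ⟨⟨hn2, hnp⟩, hgp⟩ hc k hk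
    refine ⟨⟨hn2, hnp⟩, ?_⟩
    rw [aux_char n _ hn2 (Nat.mul_ne_zero (by omega) (by omega))]
    intro p pp hpn
    exact ⟨(aux_sub_one_dvd_carmichael n p hn2 pp hpn).trans
      (hc.trans (dvd_mul_left (n - 1) k)), hgp p pp hpn⟩
  refine ⟨part1, ?_⟩
  rintro ⟨k, hk, hno⟩ n ⟨hn2, hnp⟩ hsum
  have hchar := (aux_char n (n - 1) hn2 (by omega)).mp hsum
  have hg : IsGiuga n := ⟨⟨hn2, hnp⟩, fun p pp h => (hchar p pp h).2⟩
  have hsf : Squarefree n := by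
    rw [Nat.squarefree_iff_prime_squarefree]
    intro p pp hsq
    have hpn : p ∣ n := (dvd_mul_right p p).trans hsq
    have c2 := (hchar p pp hpn).2
    have hdiv : p ∣ n / p := (Nat.dvd_div_iff_mul_dvd hpn).mpr hsq
    have h1le : 1 ≤ n / p := Nat.one_le_div_iff pp.pos |>.mpr (Nat.le_of_dvd (by omega) hpn)
    have : p ∣ 1 := by
      have := Nat.dvd_sub hdiv c2
      rwa [Nat.sub_sub_self h1le] at this
    exact pp.one_lt.ne' (Nat.dvd_one.mp this)
  have hc : carmichael n ∣ n - 1 :=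
    aux_carmichael_dvd n hn2 hsf (fun p pp h => (hchar p pp h).1)
  exact hno n (part1 n hg hc k hk)
end
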